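/- Let X and Y be compact Hausdorff spaces and let σ : X → X and τ : Y → Y be topologically transitive homeomorphisms. Suppose there exist decompositions X = X₁ ⊔ X₂ and Y = Y₁ ⊔ Y₂ into disjoint open invariant sets such that σ restricted to X₁ is conjugate to τ restricted to Y₁ and σ restricted to X₂ is conjugate to τ⁻¹ restricted to Y₂. Then σ and τ are flip-conjugate. -/

import Mathlib

open Set

/-- Homeomorphisms `σ` and `τ` are conjugate if there is a homeomorphism `h : X → Y`
with `τ ∘ h = h ∘ σ`. -/
def Conjugate {X Y : Type*} [TopologicalSpace X] [TopologicalSpace Y]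
    (σ : X ≃ₜ X) (τ : Y ≃ₜ Y) : Prop :=
  ∃ h : X ≃ₜ Y, ∀ x : X, h (σ x) = τ (h x)

/-- `σ` and `τ` are flip-conjugate if `σ` is conjugate to `τ` or to `τ⁻¹`. -/
def FlipConjugate {X Y : Type*} [TopologicalSpace X] [TopologicalSpace Y]
    (σ : X ≃ₜ X) (τ : Y ≃ₜ Y) : Prop :=
  Conjugate σ τ ∨ Conjugate σ τ.symm

/-- The restriction of `σ` to `S` is conjugate to the restriction of `τ` to `T`:
there is a homeomorphism `h : S → T` (subspace topologies) with `τ ∘ h = h ∘ σ` on `S`. -/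
def ConjugateOn {X Y : Type*} [TopologicalSpace X] [TopologicalSpace Y]
    (σ : X ≃ₜ X) (τ : Y ≃ₜ Y) (S : Set X) (T : Set Y) : Prop :=
  ∃ h : S ≃ₜ T, ∀ x : S, ∃ hx : σ (x : X) ∈ S, ((h ⟨σ (x : X), hx⟩ : Y)) = τ (h x)

/-- `σ` is topologically transitive: some point has dense two-sided orbit. -/
def TopTransitive {X : Type*} [TopologicalSpace X] (σ : X ≃ₜ X) : Prop :=
  ∃ x : X, Dense {y : X | ∃ n : ℤ, y = (σ.toEquiv ^ n) x}


lemma zpow_mem_iff {X : Type*} (e : Equiv.Perm X) (S : Set X)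
    (h : ∀ x, e x ∈ S ↔ x ∈ S) : ∀ (n : ℤ) (x : X), (e ^ n) x ∈ S ↔ x ∈ S := by
  intro n
  induction n using Int.induction_on with
  | zero => simp
  | succ k ih =>
    intro x
    have : (e ^ ((k : ℤ) + 1)) x = (e ^ (k : ℤ)) (e x) := by
      rw [zpow_add_one]; rfl
    rw [this, ih (e x), h x]
  | pred k ih =>
    intro x
    have : (e ^ ((-k : ℤ) - 1)) x = (e ^ (-k : ℤ)) (e⁻¹ x) := by
      rw [zpow_sub_one]; rfl
    rw [this, ih (e⁻¹ x)]
    constructor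
    · intro hx; have := (h (e⁻¹ x)).mpr hx; simpa using this
    · intro hx; exact (h (e⁻¹ x)).mp (by simpa using hx)

lemma inv_set_iff {X : Type*} [TopologicalSpace X] (σ : X ≃ₜ X) (S : Set X)
    (h : σ '' S = S) : ∀ x, σ.toEquiv x ∈ S ↔ x ∈ S := by
  intro x
  constructor
  · intro hx
    rw [← h] at hx
    obtain ⟨y, hy, hyx⟩ := hx
    rwa [← σ.injective hyx]
  · intro hx
    rw [← h]
    exact ⟨x, hx, rfl⟩

lemma conj_of_univ {X Y : Type*} [TopologicalSpace X] [TopologicalSpace Y]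
    (σ : X ≃ₜ X) (τ : Y ≃ₜ Y) (S : Set X) (T : Set Y) (hS : S = univ) (hT : T = univ)
    (hc : ConjugateOn σ τ S T) : Conjugate σ τ := by
  subst hS; subst hT
  obtain ⟨h, hh⟩ := hc
  refine ⟨(Homeomorph.Set.univ X).symm.trans (h.trans (Homeomorph.Set.univ Y)), ?_⟩
  intro x
  obtain ⟨hx, hhx⟩ := hh ⟨x, trivial⟩
  exact hhx

theorem stmt0 {X Y : Type*} [TopologicalSpace X] [CompactSpace X] [T2Space X]
    [TopologicalSpace Y] [CompactSpace Y] [T2Space Y]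
    (σ : X ≃ₜ X) (τ : Y ≃ₜ Y)
    (hσ : TopTransitive σ) (hτ : TopTransitive τ)
    (X₁ X₂ : Set X) (Y₁ Y₂ : Set Y)
    (hXd : Disjoint X₁ X₂) (hXu : X₁ ∪ X₂ = univ)
    (hYd : Disjoint Y₁ Y₂) (hYu : Y₁ ∪ Y₂ = univ)
    (hX₁ : IsOpen X₁) (hX₂ : IsOpen X₂) (hY₁ : IsOpen Y₁) (hY₂ : IsOpen Y₂)
    (hiX₁ : σ '' X₁ = X₁) (hiX₂ : σ '' X₂ = X₂)
    (hiY₁ : τ '' Y₁ = Y₁) (hiY₂ : τ '' Y₂ = Y₂)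
    (hc₁ : ConjugateOn σ τ X₁ Y₁) (hc₂ : ConjugateOn σ τ.symm X₂ Y₂) :
    FlipConjugate σ τ := by
  obtain ⟨x, hx⟩ := hσ
  obtain ⟨y, hy⟩ := hτ
  have hxmem : x ∈ X₁ ∪ X₂ := hXu ▸ mem_univ x
  have hymem : y ∈ Y₁ ∪ Y₂ := hYu ▸ mem_univ y
  have keyX : ∀ (S T : Set X), Disjoint S T → S ∪ T = univ → IsOpen T → σ '' S = S →
      x ∈ S → S = univ := by
    intro S T hd hu hTo hi hxS
    have horb : {y : X | ∃ n : ℤ, y = (σ.toEquiv ^ n) x} ⊆ S := by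
      rintro _ ⟨n, rfl⟩
      exact (zpow_mem_iff σ.toEquiv S (inv_set_iff σ S hi) n x).mpr hxS
    have hScl : Dense S := hx.mono horb
    have hT : T = ∅ := by
      by_contra hne
      obtain ⟨t, ht, hts⟩ := hScl.inter_open_nonempty T hTo (nonempty_iff_ne_empty.mpr hne)
      exact hd.ne_of_mem hts ht rfl
    rw [← hu, hT, union_empty]
  have keyY : ∀ (S T : Set Y), Disjoint S T → S ∪ T = univ → IsOpen T → τ '' S = S →
      y ∈ S → S = univ := by
    intro S T hd hu hTo hi hyS
    have horb : {z : Y | ∃ n : ℤ, z = (τ.toEquiv ^ n) y} ⊆ S := by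
      rintro _ ⟨n, rfl⟩
      exact (zpow_mem_iff τ.toEquiv S (inv_set_iff τ S hi) n y).mpr hyS
    have hScl : Dense S := hy.mono horb
    have hT : T = ∅ := by
      by_contra hne
      obtain ⟨t, ht, hts⟩ := hScl.inter_open_nonempty T hTo (nonempty_iff_ne_empty.mpr hne)
      exact hd.ne_of_mem hts ht rfl
    rw [← hu, hT, union_empty]
  rcases hxmem with hx1 | hx2
  · have hX1u : X₁ = univ := keyX X₁ X₂ hXd hXu hX₂ hiX₁ hx1
    rcases hymem with hy1 | hy2
    · have hY1u : Y₁ = univ := keyY Y₁ Y₂ hYd hYu hY₂ hiY₁ hy1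
      exact Or.inl (conj_of_univ σ τ X₁ Y₁ hX1u hY1u hc₁)
    · -- Y₂ = univ, so Y₁ = ∅, contradict hc₁ since X₁ nonempty
      have hY2u : Y₂ = univ := keyY Y₂ Y₁ hYd.symm (union_comm Y₁ Y₂ ▸ hYu) hY₁ hiY₂ hy2
      have hY1e : Y₁ = ∅ := by
        rw [← subset_empty_iff]
        intro z hz
        exact absurd rfl (hYd.ne_of_mem hz (hY2u ▸ mem_univ z))
      obtain ⟨h, -⟩ := hc₁
      exact absurd (h ⟨x, hx1⟩).2 (by simp [hY1e])
  · have hX2u : X₂ = univ := keyX X₂ X₁ hXd.symm (union_comm X₁ X₂ ▸ hXu) hX₁ hiX₂ hx2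
    rcases hymem with hy1 | hy2
    · have hY1u : Y₁ = univ := keyY Y₁ Y₂ hYd hYu hY₂ hiY₁ hy1
      have hY2e : Y₂ = ∅ := by
        rw [← subset_empty_iff]
        intro z hz
        exact absurd rfl (hYd.symm.ne_of_mem hz (hY1u ▸ mem_univ z))
      obtain ⟨h, -⟩ := hc₂
      exact absurd (h ⟨x, hx2⟩).2 (by simp [hY2e])
    · have hY2u : Y₂ = univ := keyY Y₂ Y₁ hYd.symm (union_comm Y₁ Y₂ ▸ hYu) hY₁ hiY₂ hy2
      exact Or.inr (conj_of_univ σ τ.symm X₂ Y₂ hX2u hY2u hc₂)
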